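/- There exists a finite algebra (S,*,') of type ⟨2,1⟩ satisfying x = (x * x') * x, (x * x') * (y' * y) = (y' * y) * (x * x'), and x * (y * z) = (x'' * y) * z, whose binary operation is not associative; hence replacing (E3) by x(yz) = (x''y)z does not yield a basis for inverse semigroups. -/
import Mathlib

def mTab : Fin 6 → Fin 6 → Fin 6 :=
  ![![5, 2, 4, 0, 1, 3],
    ![1, 0, 3, 2, 5, 4],
    ![2, 5, 0, 4, 3, 1],
    ![0, 1, 2, 3, 4, 5],
    ![4, 3, 5, 1, 0, 2],
    ![3, 4, 1, 5, 2, 0]]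

def iTab : Fin 6 → Fin 6 := ![5, 2, 4, 3, 1, 0]

theorem stmt : ∃ (S : Type) (_ : Fintype S) (m : S → S → S) (i : S → S),
    (∀ x, m (m x (i x)) x = x) ∧
    (∀ x y, m (m x (i x)) (m (i y) y) = m (m (i y) y) (m x (i x))) ∧
    (∀ x y z, m x (m y z) = m (m (i (i x)) y) z) ∧
    ∃ x y z, m (m x y) z ≠ m x (m y z) := by
  refine ⟨Fin 6, inferInstance, mTab, iTab, ?_, ?_, ?_, 1, 0, 0, ?_⟩ <;> decide
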